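/- Assume there exist constants τ_i, ξ_{ij} ∈ (0,∞) such that: (i) 0 ≤ f_i(t, x₁₀,…,x₁m₁,…,x_{n0},…,x_{n m_n}) ≤ τ_i·x_{i0} for all (t, x₁₀,…,x_{n m_n}) ∈ [0,1] × ∏_{j=1}^n ([0,∞) × ℝ^{m_j}); (ii) h_{ij}[u] ≤ ξ_{ij}·‖u_i‖_∞ for every u ∈ P; and (iii) max over i=1,…,n of ( λ_i τ_i K_{i0} + Σ_{j=1}^{p_i} η_{ij} ξ_{ij} ‖γ_{ij}‖_∞ ) < 1. Then the only possible solution in P of the system u_i(t) = λ_i ∫₀¹ k_i(t,s) f_i(s, u₁(s),…,u₁^{(m₁)}(s),…,u_n(s),…,u_n^{(m_n)}(s)) ds + Σ_{j=1}^{p_i} η_{ij} γ_{ij}(t) h_{ij}[u], i = 1,…,n, is the zero function. -/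

import Mathlib

open Set MeasureTheory

/-- The `Cᵐ[0,1]` norm `max_{0 ≤ j ≤ mi} ‖g⁽ʲ⁾‖_∞` (derivatives within `[0,1]`). -/
noncomputable def normCm (mi : ℕ) (g : ℝ → ℝ) : ℝ :=
  ⨆ j : Fin (mi + 1), ⨆ t : Set.Icc (0:ℝ) 1, |iteratedDerivWithin j.val g (Set.Icc 0 1) ↑t|

/-- The norm `‖u‖ = max_i ‖u_i‖_{C^{m_i}}` on `∏ᵢ C^{m_i}[0,1]`. -/
noncomputable def normP {n : ℕ} (m : Fin n → ℕ) (u : Fin n → ℝ → ℝ) : ℝ :=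
  ⨆ i, normCm (m i) (u i)

/-- Membership in the cone `P = {u ∈ ∏ᵢ C^{m_i}[0,1] : uᵢ ≥ 0 on [0,1]}`. -/
def memP {n : ℕ} (m : Fin n → ℕ) (u : Fin n → ℝ → ℝ) : Prop :=
  (∀ i, ContDiffOn ℝ (m i) (u i) (Set.Icc 0 1)) ∧
  (∀ i, ∀ t ∈ Set.Icc (0:ℝ) 1, 0 ≤ u i t)

/-- The vector `(u₁(s),…,u₁^{(m₁)}(s),…,u_n(s),…,u_n^{(m_n)}(s))` of values and
derivatives (within `[0,1]`), fed to the nonlinearities. -/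
noncomputable def jet {n : ℕ} (m : Fin n → ℕ) (u : Fin n → ℝ → ℝ) (s : ℝ) :
    (j : Fin n) → Fin (m j + 1) → ℝ :=
  fun j l => iteratedDerivWithin l.val (u j) (Set.Icc 0 1) s

/-- The box `∏ᵢ ([0,ρ] × [−ρ,ρ]^{m_i})`, i.e. the `x`-section of `I_ρ`. -/
def Jset {n : ℕ} (m : Fin n → ℕ) (ρ : ℝ) : Set ((j : Fin n) → Fin (m j + 1) → ℝ) :=
  {x | ∀ j, x j 0 ∈ Set.Icc (0:ℝ) ρ ∧ ∀ l : Fin (m j + 1), l ≠ 0 → x j l ∈ Set.Icc (-ρ) ρ}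

/-- The sup norm `‖g‖_∞` on `[0,1]`. -/
noncomputable def supIcc (g : ℝ → ℝ) : ℝ := ⨆ t : Set.Icc (0:ℝ) 1, |g ↑t|

lemma supIcc_ge (g : ℝ → ℝ) (hg : ContinuousOn g (Set.Icc 0 1)) {t : ℝ}
    (ht : t ∈ Set.Icc (0:ℝ) 1) : |g t| ≤ supIcc g := by
  have hb : BddAbove (Set.range fun s : Set.Icc (0:ℝ) 1 => |g ↑s|) := by
    have h1 : IsCompact ((fun s => |g s|) '' Set.Icc (0:ℝ) 1) :=
      isCompact_Icc.image_of_continuousOn hg.abs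
    have := h1.bddAbove
    rwa [Set.image_eq_range] at this
  exact le_ciSup hb ⟨t, ht⟩

lemma supIcc_nonneg (g : ℝ → ℝ) (hg : ContinuousOn g (Set.Icc 0 1)) : 0 ≤ supIcc g :=
  le_trans (abs_nonneg _) (supIcc_ge g hg (by norm_num : (0:ℝ) ∈ Set.Icc (0:ℝ) 1))

/-- Theorem 2.4 of the paper, non-existence: if
`0 ≤ f_i ≤ τ_i x_{i0}`, `h_{ij}[u] ≤ ξ_{ij} ‖u_i‖_∞` and
`max_i (λ_i τ_i K_{i0} + Σ_j η_{ij} ξ_{ij} ‖γ_{ij}‖_∞) < 1`, then the system of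
perturbed Hammerstein integral equations has at most the zero solution in `P`. -/
theorem stmt_1
    (n : ℕ) (hn : 0 < n) (m p : Fin n → ℕ)
    (hm : ∀ i, 1 ≤ m i) (hp : ∀ i, 1 ≤ p i)
    -- `dk i l t s` denotes `∂ˡk_i/∂tˡ(t,s)`; in particular `dk i 0` is the kernel `k_i`
    (dk : (i : Fin n) → ℕ → ℝ → ℝ → ℝ)
    -- (C₁): `k_i ≥ 0`, measurable, continuous in `t` for a.e. `s`, dominated by `Φ_{i0} ∈ L¹`
    -- (C₂)-(C₃): similarly for the derivatives, the `m_i`-th one off the diagonal only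
    (hk_nonneg : ∀ i, ∀ t ∈ Set.Icc (0:ℝ) 1, ∀ s ∈ Set.Icc (0:ℝ) 1, 0 ≤ dk i 0 t s)
    (hk_meas : ∀ i, ∀ l ≤ m i, Measurable (Function.uncurry (dk i l)))
    (hk_cont : ∀ i, ∀ l < m i, ∀ᵐ s ∂(volume.restrict (Set.Icc (0:ℝ) 1)),
      ContinuousOn (fun t => dk i l t s) (Set.Icc (0:ℝ) 1))
    (hk_cont_top : ∀ i, ∀ᵐ s ∂(volume.restrict (Set.Icc (0:ℝ) 1)),
      ContinuousOn (fun t => dk i (m i) t s) (Set.Icc (0:ℝ) 1 \ {s}))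
    (Φ : (i : Fin n) → ℕ → ℝ → ℝ)
    (hΦ_int : ∀ i, ∀ l ≤ m i, IntegrableOn (Φ i l) (Set.Icc (0:ℝ) 1))
    (hΦ_dom : ∀ i, ∀ l ≤ m i, ∀ t ∈ Set.Icc (0:ℝ) 1,
      ∀ᵐ s ∂(volume.restrict (Set.Icc (0:ℝ) 1)), |dk i l t s| ≤ Φ i l s)
    (hk_deriv : ∀ i, ∀ l, l + 1 < m i → ∀ s ∈ Set.Icc (0:ℝ) 1, ∀ t ∈ Set.Icc (0:ℝ) 1,
      HasDerivWithinAt (fun τ => dk i l τ s) (dk i (l + 1) t s) (Set.Icc (0:ℝ) 1) t)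
    (hk_deriv_top : ∀ i, ∀ s ∈ Set.Icc (0:ℝ) 1, ∀ t ∈ Set.Icc (0:ℝ) 1, t ≠ s →
      HasDerivWithinAt (fun τ => dk i (m i - 1) τ s) (dk i (m i) t s) (Set.Icc (0:ℝ) 1) t)
    -- (C₄): the nonlinearities `f_i` are continuous and nonnegative
    (f : (i : Fin n) → ℝ → ((j : Fin n) → Fin (m j + 1) → ℝ) → ℝ)
    (hf_cont : ∀ i, ContinuousOn
      (fun q : ℝ × ((j : Fin n) → Fin (m j + 1) → ℝ) => f i q.1 q.2)
      (Set.Icc (0:ℝ) 1 ×ˢ {x : (j : Fin n) → Fin (m j + 1) → ℝ | ∀ j, 0 ≤ x j 0}))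
    (hf_nonneg : ∀ i, ∀ t ∈ Set.Icc (0:ℝ) 1,
      ∀ x : (j : Fin n) → Fin (m j + 1) → ℝ, (∀ j, 0 ≤ x j 0) → 0 ≤ f i t x)
    -- (C₅): `γ_{ij} ∈ C^{m_i}[0,1]` nonnegative; (C₆): nonnegative parameters
    (γ : (i : Fin n) → Fin (p i) → ℝ → ℝ)
    (hγ_smooth : ∀ i j, ContDiffOn ℝ (m i) (γ i j) (Set.Icc 0 1))
    (hγ_nonneg : ∀ i j, ∀ t ∈ Set.Icc (0:ℝ) 1, 0 ≤ γ i j t)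
    (lam : Fin n → ℝ) (η : (i : Fin n) → Fin (p i) → ℝ)
    (hlam : ∀ i, 0 ≤ lam i) (hη : ∀ i j, 0 ≤ η i j)
    -- (C₈): the functionals `h_{ij} : P → [0,∞)` are continuous and map bounded
    -- sets into bounded sets
    (h : (i : Fin n) → Fin (p i) → (Fin n → ℝ → ℝ) → ℝ)
    (hh_nonneg : ∀ i j, ∀ u, memP m u → 0 ≤ h i j u)
    (hh_cont : ∀ i j, ∀ u, memP m u → ∀ ε > (0:ℝ), ∃ δ' > (0:ℝ), ∀ v, memP m v →
      normP m (fun i' t => u i' t - v i' t) < δ' → |h i j u - h i j v| < ε)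
    (hh_bdd : ∀ i j, ∀ B : ℝ, ∃ C : ℝ, ∀ u, memP m u → normP m u ≤ B → h i j u ≤ C)
    (τ : Fin n → ℝ) (ξ : (i : Fin n) → Fin (p i) → ℝ)
    (hτ : ∀ i, 0 < τ i) (hξ : ∀ i j, 0 < ξ i j)
    (hf_growth : ∀ i, ∀ t ∈ Set.Icc (0:ℝ) 1,
      ∀ x : (j : Fin n) → Fin (m j + 1) → ℝ, (∀ j, 0 ≤ x j 0) →
        f i t x ≤ τ i * x i 0)
    (hh_growth : ∀ i j, ∀ u, memP m u → h i j u ≤ ξ i j * supIcc (u i))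
    (hlt : ∀ i, lam i * τ i *
        (sSup ((fun t : ℝ => ∫ s in (0:ℝ)..1, dk i 0 t s) '' Set.Icc (0:ℝ) 1)) +
      ∑ j, η i j * ξ i j * supIcc (γ i j) < 1) :
    ∀ u : Fin n → ℝ → ℝ, memP m u →
      (∀ i, ∀ t ∈ Set.Icc (0:ℝ) 1,
        u i t = lam i * (∫ s in (0:ℝ)..1, dk i 0 t s * f i s (jet m u s)) + ∑ j, η i j * γ i j t * h i j u) →
      ∀ i, ∀ t ∈ Set.Icc (0:ℝ) 1, u i t = 0 := by
  intro u hu hsol i t ht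
  obtain ⟨husm, hupos⟩ := hu
  have huc : ∀ i', ContinuousOn (u i') (Set.Icc 0 1) := fun i' => (husm i').continuousOn
  have toII : ∀ g : ℝ → ℝ, IntegrableOn g (Set.Icc (0:ℝ) 1) →
      IntervalIntegrable g volume 0 1 := by
    intro g hg
    have he : Set.uIcc (0:ℝ) 1 = Set.Icc 0 1 := Set.uIcc_of_le (by norm_num)
    exact IntegrableOn.intervalIntegrable (by rwa [he])
  set Mi := supIcc (u i) with hMdef
  have hMnonneg : 0 ≤ Mi := supIcc_nonneg _ (huc i)
  have hjet0 : ∀ j s, jet m u s j 0 = u j s := by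
    intro j s
    simp [jet, iteratedDerivWithin_zero]
  have hjet_nonneg : ∀ s ∈ Set.Icc (0:ℝ) 1, ∀ j, 0 ≤ jet m u s j 0 := by
    intro s hs j; rw [hjet0]; exact hupos j s hs
  have hjetc : ContinuousOn (fun s => jet m u s) (Set.Icc (0:ℝ) 1) := by
    apply continuousOn_pi.2
    intro j
    apply continuousOn_pi.2
    intro l
    exact (husm j).continuousOn_iteratedDerivWithin
      (by exact_mod_cast Nat.lt_succ_iff.1 l.isLt) (uniqueDiffOn_Icc (by norm_num))
  have hfc : ContinuousOn (fun s => f i s (jet m u s)) (Set.Icc (0:ℝ) 1) := by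
    exact (hf_cont i).comp (continuousOn_id.prodMk hjetc)
      (fun s hs => ⟨hs, fun j => hjet_nonneg s hs j⟩)
  have hf_bd : ∀ s ∈ Set.Icc (0:ℝ) 1, f i s (jet m u s) ≤ τ i * Mi := by
    intro s hs
    refine le_trans (hf_growth i s hs _ (hjet_nonneg s hs)) ?_
    rw [hjet0]
    exact mul_le_mul_of_nonneg_left
      (le_trans (le_abs_self _) (supIcc_ge _ (huc i) hs)) (hτ i).le
  have hf_nn : ∀ s ∈ Set.Icc (0:ℝ) 1, 0 ≤ f i s (jet m u s) := fun s hs =>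
    hf_nonneg i s hs _ (hjet_nonneg s hs)
  have hΦint : IntegrableOn (Φ i 0) (Set.Icc (0:ℝ) 1) := hΦ_int i 0 (Nat.zero_le _)
  have hdkmeas : ∀ t' : ℝ, Measurable (fun s => dk i 0 t' s) := fun t' =>
    (hk_meas i 0 (Nat.zero_le _)).comp measurable_prodMk_left
  have hdk_int : ∀ t' ∈ Set.Icc (0:ℝ) 1,
      IntegrableOn (fun s => dk i 0 t' s) (Set.Icc (0:ℝ) 1) := by
    intro t' ht'
    refine hΦint.mono' ((hdkmeas t').aestronglyMeasurable) ?_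
    filter_upwards [hΦ_dom i 0 (Nat.zero_le _) t' ht'] with s hs
    simpa [Real.norm_eq_abs] using hs
  set K := sSup ((fun t' : ℝ => ∫ s in (0:ℝ)..1, dk i 0 t' s) '' Set.Icc (0:ℝ) 1) with hKdef
  have hKbdd : BddAbove ((fun t' : ℝ => ∫ s in (0:ℝ)..1, dk i 0 t' s) '' Set.Icc (0:ℝ) 1) := by
    refine ⟨∫ s in (0:ℝ)..1, Φ i 0 s, ?_⟩
    rintro y ⟨t', ht', rfl⟩
    refine intervalIntegral.integral_mono_ae_restrict (by norm_num)
      (toII _ (hdk_int t' ht')) (toII _ hΦint) ?_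
    filter_upwards [hΦ_dom i 0 (Nat.zero_le _) t' ht'] with s hs
    exact le_trans (le_abs_self _) hs
  have hK_nonneg : 0 ≤ K := by
    refine le_trans ?_ (le_csSup hKbdd (Set.mem_image_of_mem _ ht))
    apply intervalIntegral.integral_nonneg (by norm_num)
    intro s hs
    exact hk_nonneg i t ht s hs
  -- the key bound, for every point of [0,1]
  have key : ∀ t' ∈ Set.Icc (0:ℝ) 1, u i t' ≤
      (lam i * τ i * K + ∑ j, η i j * ξ i j * supIcc (γ i j)) * Mi := by
    intro t' ht'
    have hK_le : (∫ s in (0:ℝ)..1, dk i 0 t' s) ≤ K :=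
      le_csSup hKbdd (Set.mem_image_of_mem _ ht')
    have hFint : IntervalIntegrable (fun s => dk i 0 t' s * f i s (jet m u s)) volume 0 1 := by
      refine toII _ ?_
      refine (hΦint.mul_const (τ i * Mi)).mono'
        (((hdkmeas t').aestronglyMeasurable).mul (hfc.aestronglyMeasurable measurableSet_Icc)) ?_
      filter_upwards [hΦ_dom i 0 (Nat.zero_le _) t' ht', ae_restrict_mem measurableSet_Icc]
        with s hs hsI
      rw [Real.norm_eq_abs, abs_mul, abs_of_nonneg (hf_nn s hsI)]
      exact mul_le_mul hs (hf_bd s hsI) (hf_nn s hsI) (le_trans (abs_nonneg _) hs)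
    have hGint : IntervalIntegrable (fun s => dk i 0 t' s * (τ i * Mi)) volume 0 1 :=
      toII _ ((hdk_int t' ht').mul_const _)
    have hint_le : (∫ s in (0:ℝ)..1, dk i 0 t' s * f i s (jet m u s)) ≤ K * (τ i * Mi) := by
      have step1 : (∫ s in (0:ℝ)..1, dk i 0 t' s * f i s (jet m u s))
          ≤ ∫ s in (0:ℝ)..1, dk i 0 t' s * (τ i * Mi) := by
        refine intervalIntegral.integral_mono_on (by norm_num) hFint hGint ?_
        intro s hs
        exact mul_le_mul_of_nonneg_left (hf_bd s hs) (hk_nonneg i t' ht' s hs)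
      have step2 : (∫ s in (0:ℝ)..1, dk i 0 t' s * (τ i * Mi))
          = (∫ s in (0:ℝ)..1, dk i 0 t' s) * (τ i * Mi) :=
        intervalIntegral.integral_mul_const _ _
      rw [step2] at step1
      exact le_trans step1 (mul_le_mul_of_nonneg_right hK_le
        (mul_nonneg (hτ i).le hMnonneg))
    have hsum_le : (∑ j, η i j * γ i j t' * h i j u)
        ≤ (∑ j, η i j * ξ i j * supIcc (γ i j)) * Mi := by
      rw [Finset.sum_mul]
      apply Finset.sum_le_sum
      intro j _
      have hγt : γ i j t' ≤ supIcc (γ i j) :=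
        le_trans (le_abs_self _) (supIcc_ge _ (hγ_smooth i j).continuousOn ht')
      have hγnn : 0 ≤ γ i j t' := hγ_nonneg i j t' ht'
      have hhle : h i j u ≤ ξ i j * Mi := hh_growth i j u ⟨husm, hupos⟩
      have hhnn : 0 ≤ h i j u := hh_nonneg i j u ⟨husm, hupos⟩
      calc η i j * γ i j t' * h i j u
          ≤ η i j * supIcc (γ i j) * (ξ i j * Mi) := by
            apply mul_le_mul (mul_le_mul_of_nonneg_left hγt (hη i j)) hhle hhnn
            exact mul_nonneg (hη i j) (le_trans hγnn hγt)
        _ = η i j * ξ i j * supIcc (γ i j) * Mi := by ring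
    rw [hsol i t' ht']
    have h1 : lam i * (∫ s in (0:ℝ)..1, dk i 0 t' s * f i s (jet m u s))
        ≤ lam i * (K * (τ i * Mi)) := mul_le_mul_of_nonneg_left hint_le (hlam i)
    nlinarith [h1, hsum_le]
  -- conclude
  have hMle : Mi ≤ (lam i * τ i * K + ∑ j, η i j * ξ i j * supIcc (γ i j)) * Mi := by
    have hne : Nonempty (Set.Icc (0:ℝ) 1) :=
      (Set.nonempty_Icc.2 (by norm_num)).to_subtype
    rw [hMdef, supIcc]
    refine ciSup_le fun s => ?_
    rw [abs_of_nonneg (hupos i s s.2)]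
    exact key s s.2
  have hc : lam i * τ i * K + ∑ j, η i j * ξ i j * supIcc (γ i j) < 1 := by
    rw [hKdef]; exact hlt i
  have hM0 : Mi ≤ 0 := by nlinarith [hMle, hc, hMnonneg]
  have h0 : 0 ≤ u i t := hupos i t ht
  have h1 : u i t ≤ Mi :=
    le_trans (le_abs_self _) (supIcc_ge _ (huc i) ht)
  linarith
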